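/- Let ρ: ℤ^d → GL(n,ℤ) be an embedding such that some matrix in the image has characteristic polynomial irreducible over ℚ (irreducibility). Then the centralizer of ρ(ℤ^d) in GL(n,ℚ) acts transitively on ℤ^n \ {0}. -/
import Mathlib


open Matrix Polynomial

/-- If `ρ : ℤ^d → GL(n,ℤ)` is an embedding whose image contains a matrix
with characteristic polynomial irreducible over `ℚ`, then the centralizer of `ρ(ℤ^d)`
in `GL(n,ℚ)` acts transitively on `ℤ^n \ {0}`. -/
theorem stmt5 (n d : ℕ) (hn : 0 < n)
    (ρ : Multiplicative (Fin d → ℤ) →* GL (Fin n) ℤ)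
    (hemb : Function.Injective ρ)
    (hirr : ∃ m : Multiplicative (Fin d → ℤ), Irreducible
      (Matrix.charpoly ((ρ m : Matrix (Fin n) (Fin n) ℤ).map (Int.cast : ℤ → ℚ)))) :
    ∀ v w : Fin n → ℤ, v ≠ 0 → w ≠ 0 →
      ∃ C : Matrix (Fin n) (Fin n) ℚ, IsUnit C.det ∧
        (∀ m : Multiplicative (Fin d → ℤ),
          C * (ρ m : Matrix (Fin n) (Fin n) ℤ).map (Int.cast : ℤ → ℚ) =
            (ρ m : Matrix (Fin n) (Fin n) ℤ).map (Int.cast : ℤ → ℚ) * C) ∧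
        C.mulVec (fun i => (v i : ℚ)) = (fun i => (w i : ℚ)) := by
  intro v w hv hw
  obtain ⟨m, hirr⟩ := hirr
  haveI : Nonempty (Fin n) := ⟨⟨0, hn⟩⟩
  set A : Matrix (Fin n) (Fin n) ℚ :=
    (ρ m : Matrix (Fin n) (Fin n) ℤ).map (Int.cast : ℤ → ℚ) with hA
  set v' : Fin n → ℚ := fun i => (v i : ℚ) with hv'def
  set w' : Fin n → ℚ := fun i => (w i : ℚ) with hw'def
  have hv' : v' ≠ 0 := by
    intro h
    apply hv
    funext i
    have := congrFun h i
    simpa [hv'def] using this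
  have hw' : w' ≠ 0 := by
    intro h
    apply hw
    funext i
    have := congrFun h i
    simpa [hw'def] using this
  -- the annihilator ideal of v' under polynomials in A
  let I : Ideal (Polynomial ℚ) :=
    { carrier := {p | (aeval A p).mulVec v' = 0}
      add_mem' := by
        intro a b ha hb
        simp only [Set.mem_setOf_eq, map_add, Matrix.add_mulVec] at *
        rw [ha, hb, add_zero]
      zero_mem' := by simp
      smul_mem' := by
        intro c p hp
        simp only [Set.mem_setOf_eq, smul_eq_mul, _root_.map_mul] at *
        rw [← Matrix.mulVec_mulVec, hp, Matrix.mulVec_zero] }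
  have hmemI : ∀ p : Polynomial ℚ, p ∈ I ↔ (aeval A p).mulVec v' = 0 := fun p => Iff.rfl
  have hItop : I ≠ ⊤ := by
    intro h
    have h1 : (1 : Polynomial ℚ) ∈ I := h ▸ Submodule.mem_top
    rw [hmemI] at h1
    simp only [_root_.map_one, Matrix.one_mulVec] at h1
    exact hv' h1
  have hchi : A.charpoly ∈ I := by
    rw [hmemI, Matrix.aeval_self_charpoly, Matrix.zero_mulVec]
  have hmax : (Ideal.span {A.charpoly}).IsMaximal :=
    PrincipalIdealRing.isMaximal_of_irreducible hirr
  have hIeq : I = Ideal.span {A.charpoly} := by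
    refine (hmax.eq_of_le hItop ?_).symm
    rw [Ideal.span_le, Set.singleton_subset_iff]
    exact hchi
  have hdeg : A.charpoly.natDegree = n := by
    simp [Matrix.charpoly_natDegree_eq_dim]
  -- the evaluation linear map
  let L : Polynomial ℚ →ₗ[ℚ] (Fin n → ℚ) :=
    { toFun := fun p => (aeval A p).mulVec v'
      map_add' := by intro p q; simp [Matrix.add_mulVec]
      map_smul' := by intro c p; simp [Matrix.smul_mulVec] }
  let φ : (Fin n → ℚ) →ₗ[ℚ] (Fin n → ℚ) :=
    L ∘ₗ (Polynomial.degreeLT ℚ n).subtype ∘ₗ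
      ((Polynomial.degreeLTEquiv ℚ n).symm : (Fin n → ℚ) →ₗ[ℚ] Polynomial.degreeLT ℚ n)
  have hφinj : Function.Injective φ := by
    rw [← LinearMap.ker_eq_bot, LinearMap.ker_eq_bot']
    intro x hx
    set p : Polynomial ℚ := ((Polynomial.degreeLTEquiv ℚ n).symm x : Polynomial ℚ) with hp
    have hpI : p ∈ I := hx
    rw [hIeq, Ideal.mem_span_singleton] at hpI
    have hpdeg : p.degree < (n : WithBot ℕ) :=
      Polynomial.mem_degreeLT.mp ((Polynomial.degreeLTEquiv ℚ n).symm x).2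
    have hp0 : p = 0 := by
      by_contra hne
      have := Polynomial.degree_le_of_dvd hpI hne
      have hchideg : A.charpoly.degree = (n : WithBot ℕ) := by
        rw [Polynomial.degree_eq_natDegree hirr.ne_zero, hdeg]
      rw [hchideg] at this
      exact absurd (lt_of_le_of_lt this hpdeg) (lt_irrefl _)
    have : (Polynomial.degreeLTEquiv ℚ n).symm x = 0 := Subtype.ext hp0
    simpa using congrArg (Polynomial.degreeLTEquiv ℚ n) this
  have hφsurj : Function.Surjective φ :=
    (LinearMap.injective_iff_surjective).mp hφinj
  obtain ⟨x, hx⟩ := hφsurj w'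
  set p : Polynomial ℚ := ((Polynomial.degreeLTEquiv ℚ n).symm x : Polynomial ℚ) with hp
  set C : Matrix (Fin n) (Fin n) ℚ := aeval A p with hC
  have hCv : C.mulVec v' = w' := hx
  -- commuting with all ρ(m')
  have hcommA : ∀ m' : Multiplicative (Fin d → ℤ),
      Commute A ((ρ m' : Matrix (Fin n) (Fin n) ℤ).map (Int.cast : ℤ → ℚ)) := by
    intro m'
    have h0 : ρ m * ρ m' = ρ m' * ρ m := by
      rw [← _root_.map_mul, ← _root_.map_mul, mul_comm]
    have h1 : (ρ m : Matrix (Fin n) (Fin n) ℤ) * (ρ m') = (ρ m') * (ρ m) := by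
      exact_mod_cast congrArg (Units.val) h0
    have hmapmul : ∀ M N : Matrix (Fin n) (Fin n) ℤ,
        (M * N).map (Int.cast : ℤ → ℚ) = M.map Int.cast * N.map Int.cast := by
      intro M N
      ext i j
      simp [Matrix.mul_apply, Matrix.map_apply]
    show A * _ = _ * A
    rw [hA, ← hmapmul, ← hmapmul, h1]
  have hcommP : ∀ (B : Matrix (Fin n) (Fin n) ℚ), Commute A B →
      ∀ q : Polynomial ℚ, Commute (aeval A q) B := by
    intro B hAB q
    induction q using Polynomial.induction_on' with
    | add r s hr hs => simpa [map_add] using hr.add_left hs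
    | monomial k c =>
      rw [Polynomial.aeval_monomial]
      exact Commute.mul_left (Algebra.commutes c B) (hAB.pow_left k)
  -- invertibility
  have hpnotI : p ∉ I := by
    intro h
    rw [hmemI] at h
    exact hw' (hCv ▸ h ▸ rfl)
  have hndvd : ¬ A.charpoly ∣ p := by
    intro h
    exact hpnotI (hIeq ▸ Ideal.mem_span_singleton.mpr h)
  have hcop : IsCoprime A.charpoly p := hirr.coprime_iff_not_dvd.mpr hndvd
  obtain ⟨a, b, hab⟩ := hcop
  have hBinv : (aeval A b) * C = 1 := by
    have h := congrArg (aeval A) hab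
    rw [_root_.map_add, _root_.map_mul, _root_.map_mul, _root_.map_one,
      Matrix.aeval_self_charpoly, mul_zero, zero_add] at h
    exact h
  have hCinv : C * (aeval A b) = 1 := by
    rw [hC, ← _root_.map_mul, mul_comm p b, _root_.map_mul, ← hC]
    exact hBinv
  have hCunit : IsUnit C := ⟨⟨C, aeval A b, hCinv, hBinv⟩, rfl⟩
  refine ⟨C, ?_, ?_, hCv⟩
  · exact (Matrix.isUnit_iff_isUnit_det C).mp hCunit
  · intro m'
    exact (hcommP _ (hcommA m') p).eq
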